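/- arXiv:2205.05275 — 4 statements merged into one kernel-verified Lean document; each statement's English description precedes it below -/
import Mathlib

section
/- Let G consist of a path graph on state nodes 1, 2, ..., n (edges between i and j iff |i−j| = 1) together with a single input node u adjacent to exactly one state node l. Then for every nonempty α ⊆ V_S \ {l}, the set N(α) \ α contains a dedicated node (a vertex with exactly one neighbor in α) if and only if l is a terminal node of the path (i.e., l = 1 or l = n). -/
open scoped Classical

/-- A vertex `v` is a *dedicated node* of `α` in `G` if `v ∉ α` and `v` has
exactly one neighbor in `α`. -/
def ded {V : Type} (G : SimpleGraph V) (α : Finset V) (v : V) : Prop :=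
  v ∉ α ∧ (α.filter (G.Adj v)).card = 1

/-- Path graph on state nodes `Fin n` (edges between consecutive nodes),
together with one input node (the `Sum.inr` vertex) adjacent exactly to the
state node `l`. -/
def pathInput (n : ℕ) (l : Fin n) : SimpleGraph (Fin n ⊕ Unit) :=
  SimpleGraph.fromRel (fun x y =>
    match x, y with
    | Sum.inl i, Sum.inl j => (i : ℕ) + 1 = (j : ℕ)
    | Sum.inr _, Sum.inl j => j = l
    | _, _ => False)

lemma adj_inl {n : ℕ} {l : Fin n} (a b : Fin n) :
    (pathInput n l).Adj (Sum.inl a) (Sum.inl b) ↔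
      ((a:ℕ)+1 = b ∨ (b:ℕ)+1 = a) := by
  simp only [pathInput, SimpleGraph.fromRel_adj]
  constructor
  · rintro ⟨-, h⟩; exact h
  · intro h
    refine ⟨?_, h⟩
    intro hab
    have : a = b := Sum.inl.inj hab
    subst this
    omega

lemma adj_inr {n : ℕ} {l : Fin n} (u : Unit) (b : Fin n) :
    (pathInput n l).Adj (Sum.inr u) (Sum.inl b) ↔ b = l := by
  simp [pathInput, SimpleGraph.fromRel_adj]

lemma ded_inl {n : ℕ} {l : Fin n} (β : Finset (Fin n)) (v : Fin n) :
    ded (pathInput n l) (β.image Sum.inl) (Sum.inl v) ↔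
      v ∉ β ∧ (β.filter (fun b : Fin n => (v:ℕ)+1 = (b:ℕ) ∨ (b:ℕ)+1 = (v:ℕ))).card = 1 := by
  unfold ded
  have h1 : ((Sum.inl v : Fin n ⊕ Unit) ∉ β.image Sum.inl) ↔ v ∉ β := by
    simp [Sum.inl_injective.eq_iff]
  have h2 : (β.image Sum.inl).filter ((pathInput n l).Adj (Sum.inl v))
      = (β.filter (fun b : Fin n => (v:ℕ)+1 = (b:ℕ) ∨ (b:ℕ)+1 = (v:ℕ))).image (Sum.inl : Fin n → Fin n ⊕ Unit) := by
    ext x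
    simp only [Finset.mem_filter, Finset.mem_image]
    constructor
    · rintro ⟨⟨b, hb, rfl⟩, hadj⟩
      exact ⟨b, ⟨hb, (adj_inl v b).1 hadj⟩, rfl⟩
    · rintro ⟨b, ⟨hb, hP⟩, rfl⟩
      exact ⟨⟨b, hb, rfl⟩, (adj_inl v b).2 hP⟩
  rw [h1, h2, Finset.card_image_of_injective _
    (Sum.inl_injective : Function.Injective (Sum.inl : Fin n → Fin n ⊕ Unit))]

lemma ded_inr {n : ℕ} {l : Fin n} (β : Finset (Fin n)) (u : Unit) (hl : l ∉ β) :
    ¬ ded (pathInput n l) (β.image Sum.inl) (Sum.inr u) := by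
  rintro ⟨-, h⟩
  have : (β.image Sum.inl).filter ((pathInput n l).Adj (Sum.inr u)) = ∅ := by
    apply Finset.filter_eq_empty_iff.2
    rintro x hx
    obtain ⟨b, hb, rfl⟩ := Finset.mem_image.1 hx
    rw [adj_inr]
    rintro rfl; exact hl hb
  rw [this] at h
  simp at h

theorem stmt1 (n : ℕ) (hn : 2 ≤ n) (l : Fin n) :
    (∀ β : Finset (Fin n), β.Nonempty → l ∉ β →
        ∃ v, ded (pathInput n l) (β.image Sum.inl) v)
    ↔ ((l : ℕ) = 0 ∨ (l : ℕ) = n - 1) := by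
  constructor
  · intro H
    by_contra hl
    push_neg at hl
    obtain ⟨h0, hn1⟩ := hl
    have hl0 : 0 < (l:ℕ) := Nat.pos_of_ne_zero h0
    have hln : (l:ℕ) < n := l.isLt
    have hl1 : (l:ℕ) < n - 1 := by omega
    set β : Finset (Fin n) := Finset.univ.erase l with hβdef
    have hmem : ∀ b : Fin n, b ∈ β ↔ b ≠ l := by
      intro b; simp [hβdef]
    have hβne : β.Nonempty := by
      refine ⟨⟨0, by omega⟩, (hmem _).2 ?_⟩
      intro h
      have := congrArg Fin.val h
      simp at this
      omega
    obtain ⟨v, hv⟩ := H β hβne (by simp [hβdef])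
    match v with
    | Sum.inr u => exact ded_inr β u (by simp [hβdef]) hv
    | Sum.inl a =>
      rw [ded_inl] at hv
      obtain ⟨ha, hcard⟩ := hv
      have hal : a = l := by
        by_contra h
        exact ha ((hmem a).2 h)
      subst hal
      set b1 : Fin n := ⟨(a:ℕ)-1, by omega⟩ with hb1
      set b2 : Fin n := ⟨(a:ℕ)+1, by omega⟩ with hb2
      have hv1 : (b1:ℕ) = (a:ℕ)-1 := rfl
      have hv2 : (b2:ℕ) = (a:ℕ)+1 := rfl
      have hb1m : b1 ∈ β.filter (fun b : Fin n => (a:ℕ)+1 = (b:ℕ) ∨ (b:ℕ)+1 = (a:ℕ)) := by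
        rw [Finset.mem_filter]
        refine ⟨(hmem _).2 ?_, Or.inr (by omega)⟩
        intro h
        have := congrArg Fin.val h
        rw [hv1] at this
        omega
      have hb2m : b2 ∈ β.filter (fun b : Fin n => (a:ℕ)+1 = (b:ℕ) ∨ (b:ℕ)+1 = (a:ℕ)) := by
        rw [Finset.mem_filter]
        refine ⟨(hmem _).2 ?_, Or.inl (by omega)⟩
        intro h
        have := congrArg Fin.val h
        rw [hv2] at this
        omega
      have hne : b1 ≠ b2 := by
        intro h
        have := congrArg Fin.val h
        rw [hv1, hv2] at this
        omega
      have : 1 < (β.filter (fun b : Fin n => (a:ℕ)+1 = (b:ℕ) ∨ (b:ℕ)+1 = (a:ℕ))).card :=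
        Finset.one_lt_card.2 ⟨b1, hb1m, b2, hb2m, hne⟩
      omega
  · rintro hl β hβne hlβ
    rcases hl with hl | hl
    · -- l = 0 : take the min of β, dedicated node is min - 1
      set m := β.min' hβne with hm
      have hmβ : m ∈ β := β.min'_mem hβne
      have hmn : (m:ℕ) < n := m.isLt
      have hm1 : 1 ≤ (m:ℕ) := by
        rcases Nat.eq_zero_or_pos (m:ℕ) with h | h
        · exact absurd (show m = l from Fin.ext (by omega)) (by rintro rfl; exact hlβ hmβ)
        · exact h
      have hvlt : (m:ℕ)-1 < n := by omega
      set v : Fin n := ⟨(m:ℕ)-1, hvlt⟩ with hvdef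
      have hvval : (v:ℕ) = (m:ℕ)-1 := rfl
      refine ⟨Sum.inl v, (ded_inl β v).2 ⟨?_, ?_⟩⟩
      · intro h
        have h2 : (m:ℕ) ≤ (v:ℕ) := Fin.le_def.mp (β.min'_le v h)
        omega
      · have hfeq : β.filter (fun b : Fin n => (v:ℕ)+1 = (b:ℕ) ∨ (b:ℕ)+1 = (v:ℕ)) = {m} := by
          ext b
          simp only [Finset.mem_filter, Finset.mem_singleton]
          constructor
          · rintro ⟨hb, h | h⟩
            · exact Fin.ext (by omega)
            · exfalso
              have h2 : (m:ℕ) ≤ (b:ℕ) := Fin.le_def.mp (β.min'_le b hb)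
              omega
          · rintro rfl
            exact ⟨hmβ, Or.inl (by omega)⟩
        rw [hfeq]
        simp
    · -- l = n - 1 : take the max of β, dedicated node is max + 1
      set m := β.max' hβne with hm
      have hmβ : m ∈ β := β.max'_mem hβne
      have hmn : (m:ℕ) < n := m.isLt
      have hm1 : (m:ℕ) < n - 1 := by
        rcases lt_or_eq_of_le (show (m:ℕ) ≤ n - 1 by omega) with h | h
        · exact h
        · exact absurd (show m = l from Fin.ext (by omega)) (by rintro rfl; exact hlβ hmβ)
      have hvlt : (m:ℕ)+1 < n := by omega
      set v : Fin n := ⟨(m:ℕ)+1, hvlt⟩ with hvdef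
      have hvval : (v:ℕ) = (m:ℕ)+1 := rfl
      refine ⟨Sum.inl v, (ded_inl β v).2 ⟨?_, ?_⟩⟩
      · intro h
        have h2 : (v:ℕ) ≤ (m:ℕ) := Fin.le_def.mp (β.le_max' v h)
        omega
      · have hfeq : β.filter (fun b : Fin n => (v:ℕ)+1 = (b:ℕ) ∨ (b:ℕ)+1 = (v:ℕ)) = {m} := by
          ext b
          simp only [Finset.mem_filter, Finset.mem_singleton]
          constructor
          · rintro ⟨hb, h | h⟩
            · exfalso
              have h2 : (b:ℕ) ≤ (m:ℕ) := Fin.le_def.mp (β.le_max' b hb)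
              omega
            · exact Fin.ext (by omega)
          · rintro rfl
            exact ⟨hmβ, Or.inr (by omega)⟩
        rw [hfeq]
        simp
end

section
/- Let G be a path graph on state nodes 1,...,n (n ≥ 3) with one input node u adjacent to an interior node l (1 < l < n). Then taking α = V_S \ {l}, the set N(α) \ α equals {l}, and l is a sharing node of α (it has exactly two neighbors in α). Hence G is not strongly sign controllable. -/
open scoped Classical

lemma adj_inl_inl {n : ℕ} (l i j : Fin n) :
    (pathInput n l).Adj (Sum.inl i) (Sum.inl j) ↔
      i ≠ j ∧ ((i : ℕ) + 1 = j ∨ (j : ℕ) + 1 = i) := by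
  simp [pathInput, SimpleGraph.fromRel_adj]

lemma adj_inr_inl {n : ℕ} (l j : Fin n) (u : Unit) :
    (pathInput n l).Adj (Sum.inr u) (Sum.inl j) ↔ j = l := by
  simp [pathInput, SimpleGraph.fromRel_adj]

lemma adj_inr_inr {n : ℕ} (l : Fin n) (u u' : Unit) :
    ¬ (pathInput n l).Adj (Sum.inr u) (Sum.inr u') := by
  simp [pathInput, SimpleGraph.fromRel_adj]

theorem stmt2 (n : ℕ) (hn : 3 ≤ n) (l : Fin n)
    (hl0 : 0 < (l : ℕ)) (hl1 : (l : ℕ) < n - 1) :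
    -- with α = V_S \ {l}:
    ({v : Fin n ⊕ Unit |
        v ∉ ((Finset.univ.erase l).image Sum.inl : Finset (Fin n ⊕ Unit)) ∧
        ∃ w ∈ ((Finset.univ.erase l).image Sum.inl : Finset (Fin n ⊕ Unit)),
          (pathInput n l).Adj v w}
      = {Sum.inl l}) ∧
    ((((Finset.univ.erase l).image Sum.inl : Finset (Fin n ⊕ Unit)).filter
        ((pathInput n l).Adj (Sum.inl l))).card = 2) ∧
    (¬ ∃ v, ded (pathInput n l)
        ((Finset.univ.erase l).image Sum.inl : Finset (Fin n ⊕ Unit)) v) ∧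
    -- hence G is not strongly sign controllable
    ¬ (∀ β : Finset (Fin n), β.Nonempty → l ∉ β →
        ∃ v, ded (pathInput n l) (β.image Sum.inl) v) := by
  set α : Finset (Fin n ⊕ Unit) := (Finset.univ.erase l).image Sum.inl with hα
  have hmem : ∀ i : Fin n, Sum.inl i ∈ α ↔ i ≠ l := by
    intro i
    simp [hα, Finset.mem_image, Finset.mem_erase]
  have hmemr : ∀ u : Unit, Sum.inr u ∉ α := by
    intro u
    simp [hα, Finset.mem_image]
  -- the two neighbors of l
  have hln : (l : ℕ) + 1 < n := by omega
  set a : Fin n := ⟨(l : ℕ) - 1, by omega⟩ with ha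
  set b : Fin n := ⟨(l : ℕ) + 1, by omega⟩ with hb
  have hane : a ≠ l := by
    intro h
    have := congrArg (Fin.val) h
    simp [ha] at this
    omega
  have hbne : b ≠ l := by
    intro h
    have := congrArg (Fin.val) h
    simp [hb] at this
  have hadja : (pathInput n l).Adj (Sum.inl l) (Sum.inl a) := by
    rw [adj_inl_inl]
    refine ⟨fun h => hane h.symm, Or.inr ?_⟩
    simp [ha]; omega
  have hadjb : (pathInput n l).Adj (Sum.inl l) (Sum.inl b) := by
    rw [adj_inl_inl]
    exact ⟨fun h => hbne h.symm, Or.inl (by simp [hb])⟩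
  -- filter equality
  have hfilter : α.filter ((pathInput n l).Adj (Sum.inl l)) = {Sum.inl a, Sum.inl b} := by
    ext v
    simp only [Finset.mem_filter, Finset.mem_insert, Finset.mem_singleton]
    constructor
    · rintro ⟨hv, hadj⟩
      match v with
      | Sum.inl j =>
        rw [adj_inl_inl] at hadj
        have hav : (a : ℕ) = (l : ℕ) - 1 := rfl
        have hbv : (b : ℕ) = (l : ℕ) + 1 := rfl
        rcases hadj.2 with h | h
        · right
          exact congrArg _ (Fin.ext (by omega))
        · left
          exact congrArg _ (Fin.ext (by omega))
      | Sum.inr u => exact absurd hv (hmemr u)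
    · rintro (rfl | rfl)
      · exact ⟨(hmem a).2 hane, hadja⟩
      · exact ⟨(hmem b).2 hbne, hadjb⟩
  have hcard : (α.filter ((pathInput n l).Adj (Sum.inl l))).card = 2 := by
    rw [hfilter]
    rw [Finset.card_insert_of_notMem, Finset.card_singleton]
    simp only [Finset.mem_singleton]
    intro h
    have h2 : a = b := Sum.inl.inj h
    have h3 : (l : ℕ) - 1 = (l : ℕ) + 1 := congrArg Fin.val h2
    omega
  -- part 1
  have hset : {v : Fin n ⊕ Unit |
        v ∉ α ∧ ∃ w ∈ α, (pathInput n l).Adj v w} = {Sum.inl l} := by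
    ext v
    simp only [Set.mem_setOf_eq, Set.mem_singleton_iff]
    constructor
    · rintro ⟨hv, w, hw, hadj⟩
      match v with
      | Sum.inl i =>
        have : i = l := by
          by_contra hne
          exact hv ((hmem i).2 hne)
        exact congrArg Sum.inl this
      | Sum.inr u =>
        exfalso
        match w with
        | Sum.inl j =>
          rw [adj_inr_inl] at hadj
          subst hadj
          exact ((hmem j).1 hw) rfl
        | Sum.inr u' => exact adj_inr_inr l u u' hadj
    · rintro rfl
      refine ⟨fun h => ((hmem l).1 h) rfl, Sum.inl b, (hmem b).2 hbne, hadjb⟩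
  -- part 3
  have hnoded : ¬ ∃ v, ded (pathInput n l) α v := by
    rintro ⟨v, hv1, hv2⟩
    match v with
    | Sum.inl i =>
      have hi : i = l := by
        by_contra hne
        exact hv1 ((hmem i).2 hne)
      subst hi
      rw [hcard] at hv2
      omega
    | Sum.inr u =>
      have : α.filter ((pathInput n l).Adj (Sum.inr u)) = ∅ := by
        ext w
        simp only [Finset.mem_filter, Finset.notMem_empty, iff_false, not_and]
        intro hw hadj
        match w with
        | Sum.inl j =>
          rw [adj_inr_inl] at hadj
          subst hadj
          exact ((hmem j).1 hw) rfl
        | Sum.inr u' => exact adj_inr_inr l u u' hadj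
      rw [this] at hv2
      simp at hv2
  refine ⟨hset, hcard, hnoded, ?_⟩
  intro h
  apply hnoded
  have hβ : (Finset.univ.erase l).Nonempty := by
    refine ⟨b, Finset.mem_erase.2 ⟨hbne, Finset.mem_univ b⟩⟩
  exact h (Finset.univ.erase l) hβ (Finset.notMem_erase l _)
end

section
/- Let G₁ and G₂ be two disjoint graphs, each consisting of state nodes with input nodes, and each strongly sign controllable: for every α_i ⊆ V_i^S \ N(V_i^I), the set N(α_i) \ α_i contains a dedicated node within G_i. Form G by adding exactly one bridge edge (k, l) with k ∈ V_1^S and l ∈ V_2^S. Then G is strongly sign controllable: for every α ⊆ (V_1^S ∪ V_2^S) \ N(V_1^I ∪ V_2^I), the set N(α) \ α contains a dedicated node, regardless of the choice of k and l. -/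
open scoped Classical

/-- Merge two graphs by a single bridge edge between `k : V₁` and `l : V₂`. -/
def bridgeMerge {V₁ V₂ : Type} (G₁ : SimpleGraph V₁) (G₂ : SimpleGraph V₂)
    (k : V₁) (l : V₂) : SimpleGraph (V₁ ⊕ V₂) :=
  SimpleGraph.fromRel (fun x y =>
    match x, y with
    | Sum.inl a, Sum.inl b => G₁.Adj a b
    | Sum.inr a, Sum.inr b => G₂.Adj a b
    | Sum.inl a, Sum.inr b => a = k ∧ b = l
    | _, _ => False)

section Aux
variable {V₁ V₂ : Type} {G₁ : SimpleGraph V₁} {G₂ : SimpleGraph V₂} {k : V₁} {l : V₂}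

lemma adj_ll {a b : V₁} :
    (bridgeMerge G₁ G₂ k l).Adj (Sum.inl a) (Sum.inl b) ↔ G₁.Adj a b := by
  simp only [bridgeMerge, SimpleGraph.fromRel_adj]
  constructor
  · rintro ⟨hne, h | h⟩
    · exact h
    · exact h.symm
  · intro h
    exact ⟨by simpa using h.ne, Or.inl h⟩

lemma adj_rr {a b : V₂} :
    (bridgeMerge G₁ G₂ k l).Adj (Sum.inr a) (Sum.inr b) ↔ G₂.Adj a b := by
  simp only [bridgeMerge, SimpleGraph.fromRel_adj]
  constructor
  · rintro ⟨hne, h | h⟩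
    · exact h
    · exact h.symm
  · intro h
    exact ⟨by simpa using h.ne, Or.inl h⟩

lemma adj_lr {a : V₁} {b : V₂} :
    (bridgeMerge G₁ G₂ k l).Adj (Sum.inl a) (Sum.inr b) ↔ a = k ∧ b = l := by
  simp only [bridgeMerge, SimpleGraph.fromRel_adj]
  constructor
  · rintro ⟨hne, h | h⟩
    · exact h
    · exact h.elim
  · intro h
    exact ⟨by simp, Or.inl h⟩

lemma adj_rl {a : V₂} {b : V₁} :
    (bridgeMerge G₁ G₂ k l).Adj (Sum.inr a) (Sum.inl b) ↔ b = k ∧ a = l := by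
  rw [(bridgeMerge G₁ G₂ k l).adj_comm]; exact adj_lr

lemma filt1 (α : Finset (V₁ ⊕ V₂)) (v : V₁) :
    α.filter ((bridgeMerge G₁ G₂ k l).Adj (Sum.inl v)) =
      (α.toLeft.filter (G₁.Adj v)).image Sum.inl ∪
      (α.toRight.filter (fun b => v = k ∧ b = l)).image Sum.inr := by
  ext x
  cases x with
  | inl a => simp [adj_ll]
  | inr b => simp [adj_lr]

lemma filt2 (α : Finset (V₁ ⊕ V₂)) (v : V₂) :
    α.filter ((bridgeMerge G₁ G₂ k l).Adj (Sum.inr v)) =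
      (α.toLeft.filter (fun a => a = k ∧ v = l)).image Sum.inl ∪
      (α.toRight.filter (G₂.Adj v)).image Sum.inr := by
  ext x
  cases x with
  | inl a => simp [adj_rl]
  | inr b => simp [adj_rr]

lemma side1 (α : Finset (V₁ ⊕ V₂)) (v : V₁)
    (hv : ded G₁ α.toLeft v) (h : ¬(v = k ∧ l ∈ α.toRight)) :
    ded (bridgeMerge G₁ G₂ k l) α (Sum.inl v) := by
  constructor
  · intro hmem; exact hv.1 (Finset.mem_toLeft.2 hmem)
  · rw [filt1, Finset.card_union_of_disjoint (by simp [Finset.disjoint_left]),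
      Finset.card_image_of_injective _ Sum.inl_injective,
      Finset.card_image_of_injective _ Sum.inr_injective]
    have he : α.toRight.filter (fun b => v = k ∧ b = l) = ∅ := by
      ext b
      simp only [Finset.mem_filter, Finset.notMem_empty, iff_false, not_and]
      rintro hb hvk rfl; exact h ⟨hvk, hb⟩
    rw [he]; simpa using hv.2

lemma side2 (α : Finset (V₁ ⊕ V₂)) (v : V₂)
    (hv : ded G₂ α.toRight v) (h : ¬(v = l ∧ k ∈ α.toLeft)) :
    ded (bridgeMerge G₁ G₂ k l) α (Sum.inr v) := by
  constructor
  · intro hmem; exact hv.1 (Finset.mem_toRight.2 hmem)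
  · rw [filt2, Finset.card_union_of_disjoint (by simp [Finset.disjoint_left]),
      Finset.card_image_of_injective _ Sum.inl_injective,
      Finset.card_image_of_injective _ Sum.inr_injective]
    have he : α.toLeft.filter (fun a => a = k ∧ v = l) = ∅ := by
      ext a
      simp only [Finset.mem_filter, Finset.notMem_empty, iff_false, not_and]
      rintro ha rfl hvl; exact h ⟨hvl, ha⟩
    rw [he]; simpa using hv.2

end Aux
theorem stmt3 {V₁ V₂ : Type}
    (G₁ : SimpleGraph V₁) (VS₁ VI₁ : Finset V₁)
    (G₂ : SimpleGraph V₂) (VS₂ VI₂ : Finset V₂)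
    (hd₁ : Disjoint VS₁ VI₁) (hd₂ : Disjoint VS₂ VI₂)
    -- each input node has exactly one neighbor, a state node
    (hin₁ : ∀ u ∈ VI₁, ∃ w, w ∈ VS₁ ∧ ∀ x, G₁.Adj u x ↔ x = w)
    (hin₂ : ∀ u ∈ VI₂, ∃ w, w ∈ VS₂ ∧ ∀ x, G₂.Adj u x ↔ x = w)
    -- each component is strongly sign controllable
    (hssc₁ : ∀ α ⊆ VS₁ \ (VS₁.filter (fun v => ∃ u ∈ VI₁, G₁.Adj v u)),
        α.Nonempty → ∃ v, ded G₁ α v)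
    (hssc₂ : ∀ α ⊆ VS₂ \ (VS₂.filter (fun v => ∃ u ∈ VI₂, G₂.Adj v u)),
        α.Nonempty → ∃ v, ded G₂ α v)
    -- one bridge edge between state nodes k and l
    (k : V₁) (hk : k ∈ VS₁) (l : V₂) (hl : l ∈ VS₂) :
    -- the merged graph is strongly sign controllable
    ∀ α ⊆ ((VS₁.image Sum.inl ∪ VS₂.image Sum.inr : Finset (V₁ ⊕ V₂)) \
          ((VS₁.filter (fun v => ∃ u ∈ VI₁, G₁.Adj v u)).image Sum.inl ∪
           (VS₂.filter (fun v => ∃ u ∈ VI₂, G₂.Adj v u)).image Sum.inr)),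
      α.Nonempty → ∃ v, ded (bridgeMerge G₁ G₂ k l) α v := by
  intro α hα hne
  have hs1 : α.toLeft ⊆ VS₁ \ (VS₁.filter (fun v => ∃ u ∈ VI₁, G₁.Adj v u)) := by
    intro a ha
    have := hα (Finset.mem_toLeft.1 ha)
    simp only [Finset.mem_sdiff, Finset.mem_union, Finset.mem_image, Finset.mem_filter,
      Sum.inl.injEq] at this ⊢
    obtain ⟨h1, h2⟩ := this
    refine ⟨?_, ?_⟩
    · rcases h1 with ⟨x, hx, hxa⟩ | ⟨x, hx, hxa⟩
      · exact hxa ▸ hx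
      · exact absurd hxa (by simp)
    · intro hVS
      exact h2 (Or.inl ⟨a, hVS, rfl⟩)
  have hs2 : α.toRight ⊆ VS₂ \ (VS₂.filter (fun v => ∃ u ∈ VI₂, G₂.Adj v u)) := by
    intro a ha
    have := hα (Finset.mem_toRight.1 ha)
    simp only [Finset.mem_sdiff, Finset.mem_union, Finset.mem_image, Finset.mem_filter,
      Sum.inr.injEq] at this ⊢
    obtain ⟨h1, h2⟩ := this
    refine ⟨?_, ?_⟩
    · rcases h1 with ⟨x, hx, hxa⟩ | ⟨x, hx, hxa⟩
      · exact absurd hxa (by simp)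
      · exact hxa ▸ hx
    · intro hVS
      exact h2 (Or.inr ⟨a, hVS, rfl⟩)
  by_cases h1 : α.toLeft.Nonempty
  · obtain ⟨v₁, hv₁⟩ := hssc₁ _ hs1 h1
    by_cases hb : v₁ = k ∧ l ∈ α.toRight
    · obtain ⟨v₂, hv₂⟩ := hssc₂ _ hs2 ⟨l, hb.2⟩
      refine ⟨Sum.inr v₂, side2 α v₂ hv₂ ?_⟩
      rintro ⟨rfl, -⟩
      exact hv₂.1 hb.2
    · exact ⟨Sum.inl v₁, side1 α v₁ hv₁ hb⟩
  · have h2 : α.toRight.Nonempty := by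
      obtain ⟨x, hx⟩ := hne
      cases x with
      | inl a => exact absurd ⟨a, Finset.mem_toLeft.2 hx⟩ h1
      | inr b => exact ⟨b, Finset.mem_toRight.2 hx⟩
    obtain ⟨v₂, hv₂⟩ := hssc₂ _ hs2 h2
    refine ⟨Sum.inr v₂, side2 α v₂ hv₂ ?_⟩
    rintro ⟨-, hk'⟩
    exact h1 ⟨k, hk'⟩
end

section
/- Let G be a graph on state nodes V_S with input nodes V_I such that each input node has exactly one state-node neighbor. If for every nonempty α ⊆ V_S \ N(V_I) the set N(α)\α contains a dedicated node, then for every nonempty α ⊆ V_S the set N(α)\α contains a dedicated node. (The dedicated-node condition need only be checked on subsets avoiding N(V_I).) -/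
open scoped Classical

theorem stmt15 {V : Type} (G : SimpleGraph V) (VS VI : Finset V)
    (hd : Disjoint VS VI)
    -- the state graph is connected
    (hconn : (G.induce (VS : Set V)).Connected)
    -- each input node has exactly one neighbor, which is a state node
    (hin : ∀ u ∈ VI, ∃ w, w ∈ VS ∧ ∀ x, G.Adj u x ↔ x = w)
    -- the dedicated-node condition holds on subsets avoiding N(V_I)
    (h : ∀ α ⊆ VS \ (VS.filter (fun v => ∃ u ∈ VI, G.Adj v u)),
        α.Nonempty → ∃ v, ded G α v) :
    -- then it holds for all nonempty subsets of V_S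
    ∀ α ⊆ VS, α.Nonempty → ∃ v, ded G α v := by
  intro α hα hne
  by_cases hcase : ∃ v ∈ α, ∃ u ∈ VI, G.Adj v u
  · obtain ⟨v, hv, u, hu, hadj⟩ := hcase
    obtain ⟨w, hw, hiff⟩ := hin u hu
    have hvw : v = w := (hiff v).1 hadj.symm
    refine ⟨u, fun huα => ?_, ?_⟩
    · exact (Finset.disjoint_left.1 hd (hα huα) hu)
    · have hfe : α.filter (G.Adj u) = {w} := by
        ext x
        simp only [Finset.mem_filter, Finset.mem_singleton, hiff]
        exact ⟨fun h' => h'.2, fun h' => ⟨h' ▸ hvw ▸ hv, h'⟩⟩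
      rw [hfe, Finset.card_singleton]
  · apply h α ?_ hne
    push_neg at hcase
    intro x hx
    simp only [Finset.mem_sdiff, Finset.mem_filter, not_and]
    exact ⟨hα hx, fun _ ⟨u, hu, ha⟩ => hcase x hx u hu ha⟩
end
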